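/- Let P₀, P₁ > 0, let r be uniformly distributed on [0,1], and let B ∈ {0,1} be a random bit independent of r (with arbitrary distribution). Define the output group O by: O = B if r < ((1−B)·P₀ + B·P₁)/(P₀ + P₁), and O = 1−B otherwise. Then ℙ{O = 0} = P₀/(P₀ + P₁); i.e., the distribution of the output group is P₀/(P₀+P₁) for group 0 and P₁/(P₀+P₁) for group 1, independent of the distribution of the secret bit B. -/

import Mathlib

open MeasureTheory ProbabilityTheory

/-- Security proof step `G₀ = G₁`: if the uniform random number `r` is independent of the
secret bit `B`, then the output group `O` is distributed as `(P₀/(P₀+P₁), P₁/(P₀+P₁))`,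
independently of the distribution of `B`. -/
theorem stmt_3 {Ω : Type*} [MeasurableSpace Ω] (μ : Measure Ω) [IsProbabilityMeasure μ]
    (P₀ P₁ : ℝ) (hP₀ : 0 < P₀) (hP₁ : 0 < P₁)
    (r : Ω → ℝ) (B : Ω → ℝ) (hr : Measurable r) (hB : Measurable B)
    (hr_unif : μ.map r = volume.restrict (Set.Icc (0:ℝ) 1))
    (hB_vals : ∀ ω, B ω = 0 ∨ B ω = 1)
    (hindep : IndepFun r B μ)
    (O : Ω → ℝ)
    (hO : ∀ ω, O ω =
      if r ω < ((1 - B ω) * P₀ + B ω * P₁) / (P₀ + P₁) then B ω else 1 - B ω) :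
    μ {ω | O ω = 0} = ENNReal.ofReal (P₀ / (P₀ + P₁)) := by
  have hsum : (0:ℝ) < P₀ + P₁ := by linarith
  set t : ℝ := P₀ / (P₀ + P₁) with ht
  set s : ℝ := P₁ / (P₀ + P₁) with hs
  have hts : t + s = 1 := by rw [ht, hs]; field_simp
  have ht0 : 0 < t := div_pos hP₀ hsum
  have hs0 : 0 < s := div_pos hP₁ hsum
  have ht1 : t ≤ 1 := by linarith
  have hs1 : s ≤ 1 := by linarith
  -- the event {O = 0}
  have hset : {ω | O ω = 0} =
      (r ⁻¹' Set.Iio t ∩ B ⁻¹' {0}) ∪ (r ⁻¹' Set.Ici s ∩ B ⁻¹' {1}) := by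
    ext ω
    rcases hB_vals ω with h0 | h1
    · have hth : ((1 - B ω) * P₀ + B ω * P₁) / (P₀ + P₁) = t := by rw [h0, ht]; ring
      simp only [Set.mem_setOf_eq, hO ω, hth, h0, Set.mem_union, Set.mem_inter_iff,
        Set.mem_preimage, Set.mem_Iio, Set.mem_Ici, Set.mem_singleton_iff]
      by_cases hlt : r ω < t
      · simp [hlt]; exact hlt
      · simp [hlt]; exact not_lt.mp hlt
    · have hth : ((1 - B ω) * P₀ + B ω * P₁) / (P₀ + P₁) = s := by rw [h1, hs]; ring
      simp only [Set.mem_setOf_eq, hO ω, hth, h1, Set.mem_union, Set.mem_inter_iff,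
        Set.mem_preimage, Set.mem_Iio, Set.mem_Ici, Set.mem_singleton_iff]
      by_cases hlt : r ω < s
      · simp [hlt, not_le.mpr hlt]; exact hlt
      · simp [hlt, not_lt.mp hlt]; exact not_lt.mp hlt
  have hmr : ∀ S : Set ℝ, MeasurableSet S → μ (r ⁻¹' S) = volume (S ∩ Set.Icc (0:ℝ) 1) := by
    intro S hS
    rw [← Measure.map_apply hr hS, hr_unif, Measure.restrict_apply hS]
  have hμrt : μ (r ⁻¹' Set.Iio t) = ENNReal.ofReal t := by
    rw [hmr _ measurableSet_Iio]
    have : Set.Iio t ∩ Set.Icc (0:ℝ) 1 = Set.Ico 0 t := by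
      ext x
      simp only [Set.mem_inter_iff, Set.mem_Iio, Set.mem_Icc, Set.mem_Ico]
      constructor
      · rintro ⟨h1, h2, h3⟩; exact ⟨h2, h1⟩
      · rintro ⟨h1, h2⟩; exact ⟨h2, h1, by linarith⟩
    rw [this, Real.volume_Ico, sub_zero]
  have hμrs : μ (r ⁻¹' Set.Ici s) = ENNReal.ofReal t := by
    rw [hmr _ measurableSet_Ici]
    have : Set.Ici s ∩ Set.Icc (0:ℝ) 1 = Set.Icc s 1 := by
      ext x
      simp only [Set.mem_inter_iff, Set.mem_Ici, Set.mem_Icc]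
      constructor
      · rintro ⟨h1, h2, h3⟩; exact ⟨h1, h3⟩
      · rintro ⟨h1, h2⟩; exact ⟨h1, by linarith, h2⟩
    rw [this, Real.volume_Icc]
    congr 1
    linarith
  have hind0 : μ (r ⁻¹' Set.Iio t ∩ B ⁻¹' {0}) =
      ENNReal.ofReal t * μ (B ⁻¹' {0}) := by
    rw [hindep.measure_inter_preimage_eq_mul _ _ measurableSet_Iio (measurableSet_singleton 0),
      hμrt]
  have hind1 : μ (r ⁻¹' Set.Ici s ∩ B ⁻¹' {1}) =
      ENNReal.ofReal t * μ (B ⁻¹' {1}) := by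
    rw [hindep.measure_inter_preimage_eq_mul _ _ measurableSet_Ici (measurableSet_singleton 1),
      hμrs]
  have hdisj : Disjoint (r ⁻¹' Set.Iio t ∩ B ⁻¹' {0}) (r ⁻¹' Set.Ici s ∩ B ⁻¹' {1}) := by
    rw [Set.disjoint_left]
    rintro ω ⟨-, h0⟩ ⟨-, h1⟩
    simp only [Set.mem_preimage, Set.mem_singleton_iff] at h0 h1
    rw [h0] at h1
    norm_num at h1
  have hBdisj : Disjoint (B ⁻¹' ({0} : Set ℝ)) (B ⁻¹' {1}) := by
    rw [Set.disjoint_left]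
    intro ω h0 h1
    simp only [Set.mem_preimage, Set.mem_singleton_iff] at h0 h1
    rw [h0] at h1
    norm_num at h1
  have hBuniv : B ⁻¹' ({0} : Set ℝ) ∪ B ⁻¹' {1} = Set.univ := by
    ext ω
    simp only [Set.mem_union, Set.mem_preimage, Set.mem_singleton_iff, Set.mem_univ, iff_true]
    exact hB_vals ω
  have hBsum : μ (B ⁻¹' ({0} : Set ℝ)) + μ (B ⁻¹' {1}) = 1 := by
    rw [← measure_union hBdisj (hB (measurableSet_singleton 1)), hBuniv, measure_univ]
  rw [hset, measure_union hdisj ((hr measurableSet_Ici).inter (hB (measurableSet_singleton 1))),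
    hind0, hind1, ← mul_add, hBsum, mul_one]
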